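/- arXiv:2211.14778 — 4 statements merged into one kernel-verified Lean document; each statement's English description precedes it below -/
import Mathlib

section
/- Let G be a finite group and x, y ∈ G elements whose orders are powers of the same prime p with o(x) ≤ o(y). Then, in the power graph of G, N[x] ⊇ N[y] if and only if x is a power of y. -/
/-- Closed neighbourhood of a vertex. -/
def closedNbhd {V : Type*} (Γ : SimpleGraph V) (x : V) : Set V := {y | Γ.Adj x y} ∪ {x}

/-- Closed neighbourhood of a set of vertices (intersection convention; N[∅] = univ). -/
def closedNbhdSet {V : Type*} (Γ : SimpleGraph V) (X : Set V) : Set V :=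
  ⋂ x ∈ X, closedNbhd Γ x

/-- Neighbourhood closure X̂ = N[N[X]]. -/
def nbhdClosure {V : Type*} (Γ : SimpleGraph V) (X : Set V) : Set V :=
  closedNbhdSet Γ (closedNbhdSet Γ X)

/-- Closed twin class of a vertex. -/
def twinClass {V : Type*} (Γ : SimpleGraph V) (y : V) : Set V :=
  {x | closedNbhd Γ x = closedNbhd Γ y}

/-- The power graph of a group. -/
def powerGraph (G : Type*) [Group G] : SimpleGraph G where
  Adj x y := x ≠ y ∧ ((∃ m : ℕ, 0 < m ∧ y = x ^ m) ∨ (∃ m : ℕ, 0 < m ∧ x = y ^ m))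
  symm := ⟨by rintro x y ⟨h, h2⟩; exact ⟨h.symm, h2.symm⟩⟩
  loopless := ⟨by rintro x ⟨h, _⟩; exact h rfl⟩

/-- The ⋄-class of an element: elements generating the same cyclic subgroup. -/
def diamondClass {G : Type*} [Group G] (y : G) : Set G :=
  {x | Subgroup.zpowers x = Subgroup.zpowers y}



lemma gcd_pow_mem {G : Type*} [Group G] (y : G) (n k : ℕ) (h : y ^ n = 1) :
    y ^ (Nat.gcd n k) ∈ Subgroup.zpowers (y ^ k) := by
  rw [Subgroup.mem_zpowers_iff]
  refine ⟨n.gcdB k, ?_⟩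
  have := Nat.gcd_eq_gcd_ab n k
  calc (y ^ k) ^ n.gcdB k = (y ^ n) ^ n.gcdA k * (y ^ k) ^ n.gcdB k := by rw [h]; group
    _ = y ^ ((n : ℤ) * n.gcdA k + (k : ℤ) * n.gcdB k) := by
        rw [zpow_add]; norm_num [← zpow_natCast, ← zpow_mul]
    _ = y ^ (Nat.gcd n k) := by rw [← this, zpow_natCast]

lemma mem_zpowers_pos_pow {G : Type*} [Group G] [Fintype G] {x z : G}
    (h : x ∈ Subgroup.zpowers z) : ∃ m : ℕ, 0 < m ∧ x = z ^ m := by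
  obtain ⟨k, hk⟩ := (isOfFinOrder_of_finite z).mem_powers_iff_mem_zpowers.2 h
  rcases Nat.eq_zero_or_pos k with rfl | hk0
  · exact ⟨orderOf z, orderOf_pos z, by rw [pow_orderOf_eq_one, ← pow_zero z]; exact hk.symm⟩
  · exact ⟨k, hk0, hk.symm⟩

lemma chain_pow {G : Type*} [Group G] [Fintype G] {p b : ℕ} (hp : p.Prime) {y : G}
    (hy : orderOf y = p ^ b) (m k : ℕ) :
    y ^ m ∈ Subgroup.zpowers (y ^ k) ∨ y ^ k ∈ Subgroup.zpowers (y ^ m) := by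
  set n := p ^ b with hn
  have hpow : y ^ n = 1 := by rw [← hy, pow_orderOf_eq_one]
  obtain ⟨i, hi, hdi⟩ := (Nat.dvd_prime_pow hp).1 (Nat.gcd_dvd_left n m)
  obtain ⟨j, hj, hdj⟩ := (Nat.dvd_prime_pow hp).1 (Nat.gcd_dvd_left n k)
  rcases le_total j i with hji | hij
  · left
    have hd : Nat.gcd n k ∣ m := by
      rw [hdj]
      exact dvd_trans (pow_dvd_pow p hji) (hdi ▸ Nat.gcd_dvd_right n m)
    obtain ⟨c, hc⟩ := hd
    have h2 : (y ^ Nat.gcd n k) ^ c ∈ Subgroup.zpowers (y ^ k) :=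
      Subgroup.pow_mem _ (gcd_pow_mem y n k hpow) c
    rwa [← pow_mul, ← hc] at h2
  · right
    have hd : Nat.gcd n m ∣ k := by
      rw [hdi]
      exact dvd_trans (pow_dvd_pow p hij) (hdj ▸ Nat.gcd_dvd_right n k)
    obtain ⟨c, hc⟩ := hd
    have h2 : (y ^ Nat.gcd n m) ^ c ∈ Subgroup.zpowers (y ^ m) :=
      Subgroup.pow_mem _ (gcd_pow_mem y n m hpow) c
    rwa [← pow_mul, ← hc] at h2

theorem stmt8 {G : Type*} [Group G] [Fintype G] (p : ℕ) (hp : p.Prime) (x y : G)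
    (hx : ∃ a : ℕ, orderOf x = p ^ a) (hy : ∃ b : ℕ, orderOf y = p ^ b)
    (hle : orderOf x ≤ orderOf y) :
    closedNbhd (powerGraph G) y ⊆ closedNbhd (powerGraph G) x ↔
      ∃ m : ℕ, 0 < m ∧ x = y ^ m := by
  obtain ⟨b, hb⟩ := hy
  constructor
  · intro h
    have hyN : y ∈ closedNbhd (powerGraph G) x := h (Or.inr rfl)
    rcases hyN with hadj | hxy
    · obtain ⟨hne, hcase⟩ := hadj
      rcases hcase with ⟨k, hk0, hyk⟩ | hgood
      · -- y = x ^ k; orders force x ∈ zpowers y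
        have h1 : orderOf y ∣ orderOf x := hyk ▸ orderOf_pow_dvd k
        have heq : orderOf x = orderOf y :=
          le_antisymm hle (Nat.le_of_dvd (orderOf_pos x) h1)
        have hgcd : Nat.gcd (orderOf x) k = 1 := by
          have h2 : orderOf (x ^ k) = orderOf x / Nat.gcd (orderOf x) k := orderOf_pow x
          rw [← hyk, heq] at h2
          rw [heq]
          rcases Nat.div_eq_self.mp h2.symm with h3 | h3
          · exact absurd h3 (Nat.pos_iff_ne_zero.mp (orderOf_pos y))
          · exact heq ▸ h3
        have : x ∈ Subgroup.zpowers y := by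
          have := gcd_pow_mem x (orderOf x) k (pow_orderOf_eq_one x)
          rw [hgcd, pow_one, ← hyk] at this
          exact this
        exact mem_zpowers_pos_pow this
      · exact hgood
    · exact ⟨1, one_pos, by rw [pow_one]; exact (Set.mem_singleton_iff.mp hxy).symm⟩
  · rintro ⟨m, hm0, hxm⟩
    intro z hz
    rcases hz with hadj | hzy
    · obtain ⟨hne, hcase⟩ := hadj
      rcases hcase with ⟨a, ha0, hza⟩ | ⟨a, ha0, hya⟩
      · -- z = y ^ a; use chain with x = y ^ m
        rcases chain_pow hp hb m a with hmem | hmem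
        · rw [← hxm, ← hza] at hmem
          obtain ⟨t, ht0, hxt⟩ := mem_zpowers_pos_pow hmem
          by_cases hzx : z = x
          · exact Or.inr hzx
          · exact Or.inl ⟨fun hh => hzx hh.symm, Or.inr ⟨t, ht0, hxt⟩⟩
        · rw [← hxm, ← hza] at hmem
          obtain ⟨t, ht0, hzt⟩ := mem_zpowers_pos_pow hmem
          by_cases hzx : z = x
          · exact Or.inr hzx
          · exact Or.inl ⟨fun hh => hzx hh.symm, Or.inl ⟨t, ht0, hzt⟩⟩
      · -- y = z ^ a
        have hx2 : x = z ^ (a * m) := by rw [pow_mul, ← hya, ← hxm]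
        by_cases hzx : z = x
        · exact Or.inr hzx
        · exact Or.inl ⟨fun hh => hzx hh.symm,
            Or.inr ⟨a * m, Nat.mul_pos ha0 hm0, hx2⟩⟩
    · -- z = y
      by_cases hzx : z = x
      · exact Or.inr hzx
      · exact Or.inl ⟨fun hh => hzx hh.symm, Or.inr ⟨m, hm0, by rw [← hzy] at hxm; exact hxm⟩⟩
end

section
/- Let G be a finite group with power graph P(G), and let C be a class of the closed twin relation of P(G). Then all elements of C have the same order if and only if C is a single ⋄-class (i.e., all elements of C generate the same cyclic subgroup). -/
lemma pow_rel_iff {G : Type*} [Group G] [Fintype G] (a b : G) :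
    (∃ m : ℕ, 0 < m ∧ b = a ^ m) ↔ b ∈ Subgroup.zpowers a := by
  constructor
  · rintro ⟨m, _, rfl⟩
    exact Subgroup.pow_mem _ (Subgroup.mem_zpowers a) m
  · intro h
    have : b ∈ Submonoid.powers a := mem_powers_iff_mem_zpowers.2 h
    obtain ⟨m, hm⟩ := this
    have hm' : a ^ m = b := hm
    rcases Nat.eq_zero_or_pos m with rfl | hmpos
    · refine ⟨orderOf a, orderOf_pos a, ?_⟩
      rw [pow_orderOf_eq_one, ← hm', pow_zero]
    · exact ⟨m, hmpos, hm'.symm⟩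

lemma adj_iff {G : Type*} [Group G] [Fintype G] (a b : G) :
    (powerGraph G).Adj a b ↔ a ≠ b ∧ (b ∈ Subgroup.zpowers a ∨ a ∈ Subgroup.zpowers b) := by
  constructor
  · rintro ⟨h1, h2⟩
    exact ⟨h1, h2.imp (pow_rel_iff a b).1 (pow_rel_iff b a).1⟩
  · rintro ⟨h1, h2⟩
    exact ⟨h1, h2.imp (pow_rel_iff a b).2 (pow_rel_iff b a).2⟩

lemma diamond_subset_twin {G : Type*} [Group G] [Fintype G] (y : G) :
    diamondClass y ⊆ twinClass (powerGraph G) y := by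
  intro x hx
  have hx' : Subgroup.zpowers x = Subgroup.zpowers y := hx
  show closedNbhd (powerGraph G) x = closedNbhd (powerGraph G) y
  by_cases hxy : x = y
  · rw [hxy]
  have hyx : y ∈ Subgroup.zpowers x := hx' ▸ Subgroup.mem_zpowers y
  have hxy2 : x ∈ Subgroup.zpowers y := hx' ▸ Subgroup.mem_zpowers x
  ext z
  simp only [closedNbhd, Set.mem_union, Set.mem_setOf_eq, Set.mem_singleton_iff, adj_iff]
  constructor
  · rintro (⟨hne, h⟩ | rfl)
    · by_cases hzy : z = y
      · right; exact hzy
      · left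
        refine ⟨fun h' => hzy h'.symm, ?_⟩
        rcases h with hz | hz
        · left; rw [← hx']; exact hz
        · right; exact Subgroup.zpowers_le.mpr hz hyx
    · left; exact ⟨fun h => hxy h.symm, Or.inl hxy2⟩
  · rintro (⟨hne, h⟩ | rfl)
    · by_cases hzx : z = x
      · right; exact hzx
      · left
        refine ⟨fun h' => hzx h'.symm, ?_⟩
        rcases h with hz | hz
        · left; rw [hx']; exact hz
        · right; exact Subgroup.zpowers_le.mpr hz hxy2
    · left; exact ⟨hxy, Or.inl hyx⟩

theorem stmt9 {G : Type*} [Group G] [Fintype G] (y : G) (C : Set G)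
    (hC : C = twinClass (powerGraph G) y) :
    (∀ a ∈ C, ∀ b ∈ C, orderOf a = orderOf b) ↔ C = diamondClass y := by
  subst hC
  have hy : y ∈ twinClass (powerGraph G) y := rfl
  constructor
  · intro h
    apply Set.Subset.antisymm _ (diamond_subset_twin y)
    intro x hx
    have hx' : closedNbhd (powerGraph G) x = closedNbhd (powerGraph G) y := hx
    have hxin : x ∈ closedNbhd (powerGraph G) y := by
      rw [← hx']; exact Or.inr rfl
    have hord : orderOf x = orderOf y := h x hx y hy
    rcases hxin with hadj | hxy
    · obtain ⟨hne, hpow⟩ := (adj_iff y x).1 hadj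
      rcases hpow with hz | hz
      · show Subgroup.zpowers x = Subgroup.zpowers y
        refine Subgroup.eq_of_le_of_card_ge (Subgroup.zpowers_le.mpr hz) ?_
        rw [Nat.card_zpowers, Nat.card_zpowers, hord]
      · show Subgroup.zpowers x = Subgroup.zpowers y
        refine (Subgroup.eq_of_le_of_card_ge (Subgroup.zpowers_le.mpr hz) ?_).symm
        rw [Nat.card_zpowers, Nat.card_zpowers, hord]
    · show Subgroup.zpowers x = Subgroup.zpowers y
      rw [hxy]
  · intro h a ha b hb
    rw [h] at ha hb
    have ha' : Subgroup.zpowers a = Subgroup.zpowers y := ha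
    have hb' : Subgroup.zpowers b = Subgroup.zpowers y := hb
    rw [← Nat.card_zpowers, ← Nat.card_zpowers, ha', hb']
end

section
/- Let G be a finite group and C a closed twin class of the power graph P(G) that is different from the star class S and is of compound type (a union of at least two ⋄-classes). If y ∈ C is an element of maximum order in C, then o(y) = p^r for some prime p and integer r ≥ 2, and there exists s with 0 ≤ s ≤ r−2 such that C = { z ∈ ⟨y⟩ : p^{s+1} ≤ o(z) ≤ p^r }. -/
open Subgroup

section AuxLemmas

variable {G : Type*} [Group G] [Fintype G]

lemma exists_pos_pow_of_mem_zpowers' {x w : G} (h : w ∈ zpowers x) :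
    ∃ m : ℕ, 0 < m ∧ w = x ^ m := by
  obtain ⟨n, hn⟩ := mem_powers_iff_mem_zpowers.2 h
  rcases Nat.eq_zero_or_pos n with rfl | hpos
  · exact ⟨orderOf x, orderOf_pos x, by rw [pow_orderOf_eq_one]; simpa using hn.symm⟩
  · exact ⟨n, hpos, hn.symm⟩

/-- In a finite group, if `z, w` are both powers of `y` and `orderOf w ∣ orderOf z`,
then `w` is a power of `z`. -/
lemma mem_zpowers_of_orderOf_dvd' {y z w : G} (hz : z ∈ zpowers y) (hw : w ∈ zpowers y)
    (hd : orderOf w ∣ orderOf z) : w ∈ zpowers z := by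
  have hnpos : 0 < orderOf y := orderOf_pos y
  have hdn : orderOf z ∣ orderOf y := orderOf_dvd_of_mem_zpowers hz
  set n := orderOf y with hn
  set d := orderOf z with hdz
  set e := n / d with he
  have hen : e ∣ n := Nat.div_dvd_of_dvd hdn
  have hordye : orderOf (y ^ e) = d := by
    rw [orderOf_pow, Nat.gcd_eq_right hen, ← hn, he, Nat.div_div_self hdn hnpos.ne']
  have key : ∀ u : G, u ∈ zpowers y → u ^ d = 1 → u ∈ zpowers (y ^ e) := by
    intro u hu hud
    obtain ⟨b, _, rfl⟩ := exists_pos_pow_of_mem_zpowers' hu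
    rw [← pow_mul] at hud
    have hnbd : n ∣ b * d := by rw [hn]; exact orderOf_dvd_of_pow_eq_one hud
    have heb : e ∣ b := by
      have hd0 : 0 < d := orderOf_pos z
      have hmul : e * d ∣ b * d := by
        rw [he, Nat.div_mul_cancel hdn]; exact hnbd
      exact (Nat.mul_dvd_mul_iff_right hd0).mp hmul
    obtain ⟨c, rfl⟩ := heb
    rw [pow_mul]
    exact pow_mem (mem_zpowers _) c
  have hzz : z ∈ zpowers (y ^ e) := key z hz (pow_orderOf_eq_one z)
  have hww : w ∈ zpowers (y ^ e) := key w hw (orderOf_dvd_iff_pow_eq_one.mp hd)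
  have hle : zpowers z ≤ zpowers (y ^ e) := zpowers_le.mpr hzz
  have heq : zpowers z = zpowers (y ^ e) :=
    Subgroup.eq_of_le_of_card_ge hle
      (by rw [Nat.card_zpowers, Nat.card_zpowers, hordye])
  rw [heq]; exact hww

lemma mem_closedNbhd_iff' (x w : G) :
    w ∈ closedNbhd (powerGraph G) x ↔ (w ∈ zpowers x ∨ x ∈ zpowers w) := by
  constructor
  · rintro (h | h)
    · rcases h.2 with ⟨m, _, rfl⟩ | ⟨m, _, rfl⟩
      · exact Or.inl (pow_mem (mem_zpowers x) m)
      · exact Or.inr (pow_mem (mem_zpowers w) m)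
    · rw [Set.mem_singleton_iff] at h
      subst h; exact Or.inl (mem_zpowers w)
  · intro h
    by_cases hwx : w = x
    · right; exact hwx
    · left
      rcases h with h | h
      · obtain ⟨m, hm, hmeq⟩ := exists_pos_pow_of_mem_zpowers' h
        exact ⟨fun hh => hwx hh.symm, Or.inl ⟨m, hm, hmeq⟩⟩
      · obtain ⟨m, hm, hmeq⟩ := exists_pos_pow_of_mem_zpowers' h
        exact ⟨fun hh => hwx hh.symm, Or.inr ⟨m, hm, hmeq⟩⟩

lemma twin_iff' (x z : G) :
    closedNbhd (powerGraph G) x = closedNbhd (powerGraph G) z ↔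
      ∀ w : G, (w ∈ zpowers x ∨ x ∈ zpowers w) ↔ (w ∈ zpowers z ∨ z ∈ zpowers w) := by
  rw [Set.ext_iff]
  constructor
  · intro h w
    rw [← mem_closedNbhd_iff', ← mem_closedNbhd_iff']
    exact h w
  · intro h w
    rw [mem_closedNbhd_iff', mem_closedNbhd_iff']
    exact h w

lemma nt_lemma' {m n : ℕ} (hm : 1 < m) (hmn : m ∣ n) (hlt : m < n)
    (h : ∀ d, d ∣ n → d ∣ m ∨ m ∣ d) : ∃ p r, Nat.Prime p ∧ 2 ≤ r ∧ n = p ^ r := by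
  have hn0 : n ≠ 0 := by omega
  -- first: any prime dividing n divides m, unless all primes dividing n coincide
  have huniq : ∀ p q : ℕ, p.Prime → q.Prime → p ∣ n → q ∣ n → p = q := by
    intro p q hp hq hpn hqn
    by_contra hne
    have hprim : ∀ ℓ : ℕ, ℓ.Prime → ℓ ∣ n → ℓ ∣ m := by
      intro ℓ hℓ hℓn
      rcases h ℓ hℓn with h' | h'
      · exact h'
      · -- m ∣ ℓ, m > 1, so m = ℓ and ℓ ∣ m trivially
        have hmeq : m = ℓ := ((Nat.Prime.eq_one_or_self_of_dvd hℓ m h').resolve_left (by omega))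
        rw [hmeq]
    have hpm : p ∣ m := hprim p hp hpn
    have hqm : q ∣ m := hprim q hq hqn
    have hnm : n ∣ m := by
      rw [Nat.dvd_iff_prime_pow_dvd_dvd]
      intro ℓ k hℓ hdvd
      rcases h (ℓ ^ k) hdvd with h' | h'
      · exact h'
      · exfalso
        have hpℓ : p = ℓ :=
          (Nat.prime_dvd_prime_iff_eq hp hℓ).mp (hp.dvd_of_dvd_pow (hpm.trans h'))
        have hqℓ : q = ℓ :=
          (Nat.prime_dvd_prime_iff_eq hq hℓ).mp (hq.dvd_of_dvd_pow (hqm.trans h'))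
        exact hne (hpℓ.trans hqℓ.symm)
    have := Nat.le_of_dvd (by omega) hnm
    omega
  have hn1 : n ≠ 1 := by omega
  have hminfac : n.minFac.Prime := Nat.minFac_prime hn1
  have hnpow : n = n.minFac ^ n.primeFactorsList.length :=
    Nat.eq_prime_pow_of_unique_prime_dvd hn0
      (fun {d} hd hdn => huniq d n.minFac hd hminfac hdn (Nat.minFac_dvd n))
  refine ⟨n.minFac, n.primeFactorsList.length, hminfac, ?_, hnpow⟩
  -- m = minFac ^ t with 1 ≤ t < r forces r ≥ 2
  obtain ⟨t, ht, hmt⟩ := (Nat.dvd_prime_pow hminfac).mp (hnpow ▸ hmn)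
  have ht1 : 1 ≤ t := by
    by_contra h0
    interval_cases t
    · simp at hmt; omega
  have htlt : t < n.primeFactorsList.length := by
    have : n.minFac ^ t < n.minFac ^ n.primeFactorsList.length := by
      rw [← hmt, ← hnpow]; exact hlt
    exact (Nat.pow_lt_pow_iff_right hminfac.one_lt).mp this
  omega

end AuxLemmas

theorem stmt11 {G : Type*} [Group G] [Fintype G] (C : Set G)
    (hC : ∃ w, C = twinClass (powerGraph G) w)
    (hS : C ≠ twinClass (powerGraph G) 1)
    (hcomp : ∃ a ∈ C, ∃ b ∈ C, Subgroup.zpowers a ≠ Subgroup.zpowers b)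
    (y : G) (hy : y ∈ C) (hmax : ∀ z ∈ C, orderOf z ≤ orderOf y) :
    ∃ p r : ℕ, p.Prime ∧ 2 ≤ r ∧ orderOf y = p ^ r ∧
      ∃ s ≤ r - 2,
        C = {z | z ∈ Subgroup.zpowers y ∧ p ^ (s + 1) ≤ orderOf z ∧ orderOf z ≤ p ^ r} := by
  obtain ⟨w₀, rfl⟩ := hC
  have hyN : closedNbhd (powerGraph G) y = closedNbhd (powerGraph G) w₀ := hy
  have hmemC : ∀ z : G, z ∈ twinClass (powerGraph G) w₀ ↔
      (∀ w : G, (w ∈ zpowers z ∨ z ∈ zpowers w) ↔ (w ∈ zpowers y ∨ y ∈ zpowers w)) := by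
    intro z
    constructor
    · intro hz
      exact (twin_iff' z y).mp ((show closedNbhd (powerGraph G) z = _ from hz).trans hyN.symm)
    · intro hz
      exact (show closedNbhd (powerGraph G) z = closedNbhd (powerGraph G) w₀ from
        ((twin_iff' z y).mpr hz).trans hyN)
  have hone : (1 : G) ∉ twinClass (powerGraph G) w₀ := by
    intro h1
    apply hS
    have h1' : closedNbhd (powerGraph G) 1 = closedNbhd (powerGraph G) w₀ := h1
    ext z
    exact ⟨fun h => (show closedNbhd (powerGraph G) z = _ from h).trans h1'.symm,
      fun h => (show closedNbhd (powerGraph G) z = _ from h).trans h1'⟩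
  -- every member of C lies in ⟨y⟩
  have hsub : ∀ z ∈ twinClass (powerGraph G) w₀, z ∈ zpowers y := by
    intro z hz
    have h2 : z ∈ zpowers y ∨ y ∈ zpowers z :=
      ((hmemC z).mp hz z).mp (Or.inl (mem_zpowers z))
    rcases h2 with h2 | h2
    · exact h2
    · have heq : zpowers y = zpowers z :=
        Subgroup.eq_of_le_of_card_ge (zpowers_le.mpr h2)
          (by rw [Nat.card_zpowers, Nat.card_zpowers]; exact hmax z hz)
      rw [heq]; exact mem_zpowers z
  -- choose x ∈ C with ⟨x⟩ ≠ ⟨y⟩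
  obtain ⟨a, ha, b, hb, hab⟩ := hcomp
  obtain ⟨x, hxC, hxne⟩ : ∃ x ∈ twinClass (powerGraph G) w₀, zpowers x ≠ zpowers y := by
    by_cases h : zpowers a = zpowers y
    · exact ⟨b, hb, fun hb' => hab (h.trans hb'.symm)⟩
    · exact ⟨a, ha, h⟩
  have hxy : x ∈ zpowers y := hsub x hxC
  have hx1 : x ≠ 1 := fun h => hone (h ▸ hxC)
  have hm1 : 1 < orderOf x := by
    have h1 : orderOf x ≠ 1 := fun h => hx1 (orderOf_eq_one_iff.mp h)
    have h2 : 0 < orderOf x := orderOf_pos x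
    omega
  have hmdvd : orderOf x ∣ orderOf y := orderOf_dvd_of_mem_zpowers hxy
  have hmlt : orderOf x < orderOf y := by
    refine lt_of_le_of_ne (hmax x hxC) fun heq => hxne ?_
    exact Subgroup.eq_of_le_of_card_ge (zpowers_le.mpr hxy)
      (by rw [Nat.card_zpowers, Nat.card_zpowers, heq])
  have hdivcond : ∀ d, d ∣ orderOf y → d ∣ orderOf x ∨ orderOf x ∣ d := by
    intro d hd
    have hzy : y ^ (orderOf y / d) ∈ zpowers y := pow_mem (mem_zpowers y) _
    have hoz : orderOf (y ^ (orderOf y / d)) = d := by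
      rw [orderOf_pow, Nat.gcd_eq_right (Nat.div_dvd_of_dvd hd),
        Nat.div_div_self hd (orderOf_pos y).ne']
    rcases ((hmemC x).mp hxC (y ^ (orderOf y / d))).mpr (Or.inl hzy) with h | h
    · left; rw [← hoz]; exact orderOf_dvd_of_mem_zpowers h
    · right; rw [← hoz]; exact orderOf_dvd_of_mem_zpowers h
  obtain ⟨p, r, hp, hr, hn⟩ := nt_lemma' hm1 hmdvd hmlt hdivcond
  -- element of minimal order in C
  have hTne : (orderOf '' (twinClass (powerGraph G) w₀)).Nonempty := ⟨orderOf y, y, hy, rfl⟩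
  obtain ⟨x₀, hx₀C, hx₀ord⟩ : ∃ x₀ ∈ twinClass (powerGraph G) w₀,
      orderOf x₀ = sInf (orderOf '' (twinClass (powerGraph G) w₀)) := by
    obtain ⟨x₀, hx₀C, h⟩ := Nat.sInf_mem hTne
    exact ⟨x₀, hx₀C, h⟩
  have hmin : ∀ z ∈ twinClass (powerGraph G) w₀, orderOf x₀ ≤ orderOf z := by
    intro z hz
    rw [hx₀ord]
    exact Nat.sInf_le ⟨z, hz, rfl⟩
  have hx₀y : x₀ ∈ zpowers y := hsub x₀ hx₀C
  obtain ⟨k, hk, hkord⟩ := (Nat.dvd_prime_pow hp).mp (hn ▸ orderOf_dvd_of_mem_zpowers hx₀y)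
  have hk1 : 1 ≤ k := by
    by_contra h0
    have : k = 0 := by omega
    subst this
    simp only [pow_zero] at hkord
    exact hone (orderOf_eq_one_iff.mp hkord ▸ hx₀C)
  have hklt : k < r := by
    have h1 : p ^ k < p ^ r := by
      rw [← hkord, ← hn]
      exact lt_of_le_of_lt (hmin x hxC) hmlt
    exact (Nat.pow_lt_pow_iff_right hp.one_lt).mp h1
  refine ⟨p, r, hp, hr, hn, k - 1, by omega, ?_⟩
  have hs1 : k - 1 + 1 = k := by omega
  ext z
  simp only [Set.mem_setOf_eq, hs1]
  constructor
  · intro hz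
    refine ⟨hsub z hz, ?_, ?_⟩
    · rw [← hkord]; exact hmin z hz
    · rw [← hn]; exact hmax z hz
  · rintro ⟨hzy, hlo, hhi⟩
    obtain ⟨j, hj, hjord⟩ := (Nat.dvd_prime_pow hp).mp (hn ▸ orderOf_dvd_of_mem_zpowers hzy)
    have hkj : k ≤ j := by
      rw [hjord] at hlo
      exact (Nat.pow_le_pow_iff_right hp.one_lt).mp hlo
    have hx₀z : x₀ ∈ zpowers z :=
      mem_zpowers_of_orderOf_dvd' hzy hx₀y
        (by rw [hkord, hjord]; exact pow_dvd_pow p hkj)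
    apply (hmemC z).mpr
    intro w
    constructor
    · rintro (hw | hw)
      · exact Or.inl (zpowers_le.mpr hzy hw)
      · exact ((hmemC x₀).mp hx₀C w).mp (Or.inr (zpowers_le.mpr hw hx₀z))
    · rintro (hw | hw)
      · rcases ((hmemC x₀).mp hx₀C w).mpr (Or.inl hw) with h | h
        · exact Or.inl (zpowers_le.mpr hx₀z h)
        · obtain ⟨i, hi, hiord⟩ :=
            (Nat.dvd_prime_pow hp).mp (hn ▸ orderOf_dvd_of_mem_zpowers hw)
          rcases le_total i j with hij | hij
          · exact Or.inl (mem_zpowers_of_orderOf_dvd' hzy hw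
              (by rw [hiord, hjord]; exact pow_dvd_pow p hij))
          · exact Or.inr (mem_zpowers_of_orderOf_dvd' hw hzy
              (by rw [hjord, hiord]; exact pow_dvd_pow p hij))
      · exact Or.inr (zpowers_le.mpr hw hzy)
end

section
/- Let G be a finite group and X, Y distinct ⋄-classes joined in the power graph (some x ∈ X and y ∈ Y adjacent) with |X| > |Y|. Then every element of Y is a power of every element of X. -/
open Subgroup

lemma aux_zpowers_cyclic {G : Type*} [Group G] (x : G) : IsCyclic (zpowers x) := by
  constructor
  refine ⟨⟨x, mem_zpowers x⟩, ?_⟩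
  rintro ⟨a, k, rfl⟩
  exact ⟨k, by ext; simp⟩

lemma aux_zpowers_eq_iff {G : Type*} [Group G] [Finite G] {g x : G} :
    zpowers g = zpowers x ↔ g ∈ zpowers x ∧ orderOf g = orderOf x := by
  constructor
  · intro h
    refine ⟨h ▸ mem_zpowers g, ?_⟩
    rw [← Nat.card_zpowers, ← Nat.card_zpowers, h]
  · rintro ⟨hm, ho⟩
    have hle : zpowers g ≤ zpowers x := zpowers_le.mpr hm
    have : (zpowers g : Set G) = (zpowers x : Set G) := by
      apply Set.eq_of_subset_of_ncard_le hle
      rw [← Nat.card_coe_set_eq, ← Nat.card_coe_set_eq]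
      show Nat.card (zpowers x) ≤ Nat.card (zpowers g)
      rw [Nat.card_zpowers, Nat.card_zpowers, ho]
    exact SetLike.coe_injective this

lemma aux_ncard_diamondClass {G : Type*} [Group G] [Fintype G] (x : G) :
    (diamondClass x).ncard = (orderOf x).totient := by
  classical
  haveI : IsCyclic (zpowers x) := aux_zpowers_cyclic x
  have hcard : Fintype.card (zpowers x) = orderOf x := Fintype.card_zpowers
  have h := IsCyclic.card_orderOf_eq_totient (α := zpowers x) (d := orderOf x)
    (hcard ▸ dvd_rfl)
  have e : diamondClass x ≃ {a : zpowers x // orderOf a = orderOf x} :=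
    { toFun := fun g => ⟨⟨g.1, (aux_zpowers_eq_iff.mp g.2).1⟩,
        (Subgroup.orderOf_mk g.1 _).trans (aux_zpowers_eq_iff.mp g.2).2⟩
      invFun := fun a => ⟨a.1.1, aux_zpowers_eq_iff.mpr ⟨a.1.2,
        (Subgroup.orderOf_coe a.1).trans a.2⟩⟩
      left_inv := fun g => rfl
      right_inv := fun a => rfl }
  rw [← Nat.card_coe_set_eq, Nat.card_congr e, Nat.card_eq_fintype_card,
    Fintype.card_subtype, ← h]

theorem stmt18 {G : Type*} [Group G] [Fintype G] (x y : G)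
    (hXY : diamondClass x ≠ diamondClass y)
    (hcard : (diamondClass y).ncard < (diamondClass x).ncard)
    (hjoin : ∃ a ∈ diamondClass x, ∃ b ∈ diamondClass y, (powerGraph G).Adj a b) :
    ∀ a ∈ diamondClass x, ∀ b ∈ diamondClass y, ∃ m : ℕ, 0 < m ∧ b = a ^ m := by
  obtain ⟨a, ha, b, hb, hne, hpow⟩ := hjoin
  have ha' : zpowers a = zpowers x := ha
  have hb' : zpowers b = zpowers y := hb
  have hyx : zpowers y ≤ zpowers x := by
    have hnot : ¬ x ∈ zpowers y := by
      intro hx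
      have hdvd : orderOf x ∣ orderOf y := orderOf_dvd_of_mem_zpowers hx
      have hle : (orderOf x).totient ≤ (orderOf y).totient :=
        Nat.le_of_dvd (Nat.totient_pos.mpr (orderOf_pos y)) (Nat.totient_dvd_of_dvd hdvd)
      rw [aux_ncard_diamondClass, aux_ncard_diamondClass] at hcard
      omega
    rcases hpow with ⟨m, hm, rfl⟩ | ⟨m, hm, hab⟩
    · rw [← ha', ← hb']
      exact zpowers_le.mpr ⟨m, by simp⟩
    · exfalso
      apply hnot
      have hab' : zpowers a ≤ zpowers b := zpowers_le.mpr ⟨m, by simp [hab]⟩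
      have hx : x ∈ zpowers a := ha' ▸ mem_zpowers x
      exact hb' ▸ hab' hx
  intro a' ha2 b' hb2
  have ha2' : zpowers a' = zpowers x := ha2
  have hb2' : zpowers b' = zpowers y := hb2
  have hmem : b' ∈ zpowers a' := by
    rw [ha2']
    exact hyx (hb2' ▸ mem_zpowers b')
  have : b' ∈ Submonoid.powers a' := by
    rw [mem_powers_iff_mem_zpowers]; exact hmem
  obtain ⟨n, hn⟩ := this
  refine ⟨n + orderOf a', by have := orderOf_pos a'; omega, ?_⟩
  rw [pow_add, pow_orderOf_eq_one, mul_one]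
  exact hn.symm
end
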